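/- Let ψ1 on ℂ^{d1}⊗ℂ^{d1} be a pure state in Schmidt form of Schmidt rank 1 (separable), and let ψ2 on ℂ^{d2}⊗ℂ^{d2} be a pure state in Schmidt form of Schmidt rank at least 2 (entangled). Then for every p with 0 < p ≤ 1, the matrix ρ_p(ψ1,ψ2)^{Γ_A} is not positive semidefinite, i.e. it has a negative eigenvalue. -/

import Mathlib

open Matrix BigOperators
open scoped ComplexOrder

/-- Partial transpose with respect to the first tensor factor (side A):
`X^Γ[(a,b),(a',b')] = X[(a',b),(a,b')]`. -/
def ptg {A B : Type*} (X : Matrix (A × B) (A × B) ℂ) : Matrix (A × B) (A × B) ℂ :=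
  Matrix.of fun p q => X (q.1, p.2) (p.1, q.2)

/-- A pure state in Schmidt form with Schmidt coefficients `μ`:
`ψ[(i,j)] = μ_i δ_{ij}`. -/
noncomputable def schmidtVec {d : ℕ} (μ : Fin d → ℝ) : Fin d × Fin d → ℂ :=
  fun p => if p.1 = p.2 then (μ p.1 : ℂ) else 0

/-- Rank-one projection onto the vector `v`. -/
noncomputable def projVec {n : Type*} (v : n → ℂ) : Matrix n n ℂ :=
  Matrix.of fun p q => v p * star (v q)

/-- The Schmidt rank: the number of nonzero Schmidt coefficients. -/
noncomputable def schmidtRank {d : ℕ} (μ : Fin d → ℝ) : ℕ :=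
  (Finset.univ.filter fun i => μ i ≠ 0).card

/-- Cut-respecting tensor product `σ ⊠ τ`. -/
def ctens {d1 d2 : ℕ} (σ : Matrix (Fin d1 × Fin d1) (Fin d1 × Fin d1) ℂ)
    (τ : Matrix (Fin d2 × Fin d2) (Fin d2 × Fin d2) ℂ) :
    Matrix ((Fin d1 × Fin d2) × (Fin d1 × Fin d2)) ((Fin d1 × Fin d2) × (Fin d1 × Fin d2)) ℂ :=
  Matrix.of fun p q => σ (p.1.1, p.2.1) (q.1.1, q.2.1) * τ (p.1.2, p.2.2) (q.1.2, q.2.2)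

/-- The state `ρ_p(ψ1,ψ2)`. -/
noncomputable def rhoP {d1 d2 : ℕ} (μ1 : Fin d1 → ℝ) (μ2 : Fin d2 → ℝ) (p : ℝ) :
    Matrix ((Fin d1 × Fin d2) × (Fin d1 × Fin d2)) ((Fin d1 × Fin d2) × (Fin d1 × Fin d2)) ℂ :=
  ((1 - p) / (((d1 : ℝ) ^ 2 - 1) * ((d2 : ℝ) ^ 2 - 1))) •
      ctens (1 - projVec (schmidtVec μ1)) (1 - projVec (schmidtVec μ2))
    + p • ctens (projVec (schmidtVec μ1)) (projVec (schmidtVec μ2))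

theorem rhoP_NPT_of_one_separable_one_entangled {d1 d2 : ℕ}
    (μ1 : Fin d1 → ℝ) (μ2 : Fin d2 → ℝ)
    (h1pos : ∀ i, 0 ≤ μ1 i) (h1norm : ∑ i, μ1 i ^ 2 = 1)
    (h2pos : ∀ i, 0 ≤ μ2 i) (h2norm : ∑ i, μ2 i ^ 2 = 1)
    (h1rank : schmidtRank μ1 = 1) (h2rank : 2 ≤ schmidtRank μ2)
    (p : ℝ) (hp0 : 0 < p) (hp1 : p ≤ 1) :
    ¬ (ptg (rhoP μ1 μ2 p)).PosSemidef := by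

  intro h
  -- extract the unique nonzero index of μ1
  obtain ⟨i0, hi0⟩ := Finset.card_eq_one.mp h1rank
  have hmem1 : ∀ i, μ1 i ≠ 0 ↔ i = i0 := by
    intro i
    constructor
    · intro hne
      have : i ∈ Finset.univ.filter fun i => μ1 i ≠ 0 := by
        simp [hne]
      rw [hi0] at this; simpa using this
    · intro hi
      subst hi
      have : i ∈ Finset.univ.filter fun i => μ1 i ≠ 0 := by
        rw [hi0]; simp
      simpa using this
  have h1zero : ∀ i, i ≠ i0 → μ1 i = 0 := by
    intro i hi
    by_contra hne
    exact hi ((hmem1 i).mp hne)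
  have hsum1 : ∑ i, μ1 i ^ 2 = μ1 i0 ^ 2 := by
    apply Finset.sum_eq_single
    · intro i _ hi; rw [h1zero i hi]; ring
    · intro hi; exact absurd (Finset.mem_univ i0) hi
  have hmu0 : μ1 i0 = 1 := by
    have h2 : μ1 i0 ^ 2 = 1 := by rw [← hsum1]; exact h1norm
    nlinarith [h1pos i0]
  -- extract two distinct nonzero indices of μ2
  obtain ⟨j, hj, k, hk, hjk⟩ := Finset.one_lt_card.mp (lt_of_lt_of_le one_lt_two h2rank)
  have haj : μ2 j ≠ 0 := by simpa using hj
  have hak : μ2 k ≠ 0 := by simpa using hk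
  have hajpos : 0 < μ2 j := lt_of_le_of_ne (h2pos j) (Ne.symm haj)
  have hakpos : 0 < μ2 k := lt_of_le_of_ne (h2pos k) (Ne.symm hak)
  -- the witness vector
  set P : (Fin d1 × Fin d2) × (Fin d1 × Fin d2) := ((i0, j), (i0, k)) with hP
  set Q : (Fin d1 × Fin d2) × (Fin d1 × Fin d2) := ((i0, k), (i0, j)) with hQ
  have hPQ : P ≠ Q := by
    simp only [hP, hQ, Prod.mk.injEq, ne_eq, not_and]
    intro h1; exact absurd h1.2 hjk
  set v : (Fin d1 × Fin d2) × (Fin d1 × Fin d2) → ℂ :=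
    fun x => if x = P then 1 else if x = Q then -1 else 0 with hv
  have hvP : v P = 1 := by simp [hv]
  have hvQ : v Q = -1 := by simp [hv, Ne.symm hPQ]
  have hsumlem : ∀ (f : (Fin d1 × Fin d2) × (Fin d1 × Fin d2) → ℂ),
      (∀ x, x ≠ P → x ≠ Q → f x = 0) → ∑ x, f x = f P + f Q := by
    intro f hf
    rw [← Finset.sum_subset (Finset.subset_univ {P, Q})]
    · rw [Finset.sum_pair hPQ]
    · intro x _ hx
      simp only [Finset.mem_insert, Finset.mem_singleton, not_or] at hx
      exact hf x hx.1 hx.2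
  set M : Matrix ((Fin d1 × Fin d2) × (Fin d1 × Fin d2))
      ((Fin d1 × Fin d2) × (Fin d1 × Fin d2)) ℂ := ptg (rhoP μ1 μ2 p) with hM
  have hmv : ∀ x, (M *ᵥ v) x = M x P - M x Q := by
    intro x
    show ∑ q, M x q * v q = _
    rw [hsumlem (fun q => M x q * v q) (by
      intro q h1 h2; simp [hv, h1, h2])]
    rw [hvP, hvQ]; ring
  have hQF : star v ⬝ᵥ (M *ᵥ v) = M P P - M P Q - M Q P + M Q Q := by
    show ∑ x, (star v) x * (M *ᵥ v) x = _
    rw [hsumlem (fun x => (star v) x * (M *ᵥ v) x) (by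
      intro x h1 h2
      simp [hv, h1, h2])]
    simp only [Pi.star_apply, hvP, hvQ, hmv]
    simp only [star_one, star_neg]
    ring
  -- compute the four entries
  have hPP : M P P = 0 := by
    simp [hM, hP, ptg, rhoP, ctens, projVec, schmidtVec, Matrix.add_apply,
      Matrix.smul_apply, Matrix.sub_apply, Matrix.one_apply, hjk, hmu0]
  have hQQ : M Q Q = 0 := by
    simp [hM, hQ, ptg, rhoP, ctens, projVec, schmidtVec, Matrix.add_apply,
      Matrix.smul_apply, Matrix.sub_apply, Matrix.one_apply, Ne.symm hjk, hmu0]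
  have hPQe : M P Q = (p : ℂ) * ((μ2 k : ℂ) * (μ2 j : ℂ)) := by
    simp [hM, hP, hQ, ptg, rhoP, ctens, projVec, schmidtVec, Matrix.add_apply,
      Matrix.smul_apply, Matrix.sub_apply, Matrix.one_apply, hjk, Ne.symm hjk, hmu0,
      Complex.real_smul]
  have hQPe : M Q P = (p : ℂ) * ((μ2 j : ℂ) * (μ2 k : ℂ)) := by
    simp [hM, hP, hQ, ptg, rhoP, ctens, projVec, schmidtVec, Matrix.add_apply,
      Matrix.smul_apply, Matrix.sub_apply, Matrix.one_apply, hjk, Ne.symm hjk, hmu0,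
      Complex.real_smul]
  have hpos := h.dotProduct_mulVec_nonneg v
  rw [hQF, hPP, hQQ, hPQe, hQPe] at hpos
  have heq : (0 : ℂ) - (p : ℂ) * ((μ2 k : ℂ) * (μ2 j : ℂ))
      - (p : ℂ) * ((μ2 j : ℂ) * (μ2 k : ℂ)) + 0
      = ((-(2 * p * (μ2 j * μ2 k)) : ℝ) : ℂ) := by
    push_cast; ring
  rw [heq] at hpos
  have : (0 : ℝ) ≤ -(2 * p * (μ2 j * μ2 k)) := by
    exact_mod_cast hpos
  nlinarith [mul_pos hp0 (mul_pos hajpos hakpos)]
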